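/- arXiv:1405.0697 — 2 statements merged into one kernel-verified Lean document; each statement's English description precedes it below -/
import Mathlib

section
/- Detailed fluctuation theorem: For a path x̂ with jumps x_{j-1}→x_j at times t_j under protocol α̂, define the path weight T^{α̂}[x̂] = (∏_{j=1}^n R^{α(t_j)}_{x_{j-1}→x_j}) · ∏_{j=0}^n exp(-∫_{t_j}^{t_{j+1}} λ^{α(t)}_{x_j} dt), where λ^α_x = Σ_{y≠x} R^α_{x→y} is the escape rate (t_0 = -τ, t_{n+1} = τ). Then the weight of the time-reversed path under the time-reversed protocol satisfies T^{α̂†}[x̂†] = exp(-Θ^{α̂}[x̂]) · T^{α̂}[x̂]. -/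
/-- Detailed fluctuation theorem: the weight of the time-reversed path under the
time-reversed protocol equals `exp (-Θ)` times the weight of the original path. -/
theorem detailed_fluctuation_theorem {S A : Type*} [Fintype S] [DecidableEq S] (n : ℕ)
    (R : A → S → S → ℝ) (τ : ℝ)
    (x : Fin (n+1) → S) (t : Fin n → ℝ)
    (hx : ∀ j : Fin n, x j.castSucc ≠ x j.succ)
    (htmono : StrictMono t)
    (te : Fin (n+2) → ℝ) (hte0 : te 0 = -τ) (htel : te (Fin.last (n+1)) = τ)
    (htei : ∀ j : Fin n, te j.succ.castSucc = t j)
    (α : ℝ → A)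
    (hpos : ∀ j : Fin n, 0 < R (α (t j)) (x j.castSucc) (x j.succ))
    (hpos' : ∀ j : Fin n, 0 < R (α (t j)) (x j.succ) (x j.castSucc))
    (αdag : ℝ → A) (hαdag : ∀ s, αdag s = α (-s))
    (xdag : Fin (n+1) → S) (hxdag : ∀ i, xdag i = x i.rev)
    (tdag : Fin n → ℝ) (htdag : ∀ j, tdag j = - t j.rev)
    (tedag : Fin (n+2) → ℝ) (htedag : ∀ j, tedag j = - te j.rev) :
    (∏ j : Fin n, R (αdag (tdag j)) (xdag j.castSucc) (xdag j.succ)) *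
      ∏ j : Fin (n+1), Real.exp (-(∫ s in (tedag j.castSucc)..(tedag j.succ),
        ∑ y ∈ Finset.univ.filter (fun y => y ≠ xdag j), R (αdag s) (xdag j) y))
    = Real.exp (-(∑ j : Fin n, Real.log (R (α (t j)) (x j.castSucc) (x j.succ) /
        R (α (t j)) (x j.succ) (x j.castSucc)))) *
      ((∏ j : Fin n, R (α (t j)) (x j.castSucc) (x j.succ)) *
       ∏ j : Fin (n+1), Real.exp (-(∫ s in (te j.castSucc)..(te j.succ),
        ∑ y ∈ Finset.univ.filter (fun y => y ≠ x j), R (α s) (x j) y))) := by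
  -- First product: reindex by rev
  have h1 : (∏ j : Fin n, R (αdag (tdag j)) (xdag j.castSucc) (xdag j.succ))
      = ∏ j : Fin n, R (α (t j)) (x j.succ) (x j.castSucc) := by
    refine (Fintype.prod_equiv Fin.revPerm _ _ fun j => ?_).symm
    simp [hαdag, htdag, hxdag, Fin.rev_castSucc, Fin.rev_succ, Fin.rev_rev]
  -- Second product: reindex by rev and change variables in the integral
  have h2 : (∏ j : Fin (n+1), Real.exp (-(∫ s in (tedag j.castSucc)..(tedag j.succ),
        ∑ y ∈ Finset.univ.filter (fun y => y ≠ xdag j), R (αdag s) (xdag j) y)))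
      = ∏ j : Fin (n+1), Real.exp (-(∫ s in (te j.castSucc)..(te j.succ),
        ∑ y ∈ Finset.univ.filter (fun y => y ≠ x j), R (α s) (x j) y)) := by
    refine (Fintype.prod_equiv Fin.revPerm _ _ fun j => ?_).symm
    have hcs : (Fin.revPerm j).castSucc.rev = j.succ := by
      simp [Fin.rev_castSucc, Fin.rev_rev]
    have hs : (Fin.revPerm j).succ.rev = j.castSucc := by
      simp [Fin.rev_succ, Fin.rev_rev]
    have hxd : xdag (Fin.revPerm j) = x j := by
      simp [hxdag, Fin.rev_rev]
    rw [htedag, htedag, hcs, hs, hxd]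
    congr 2
    have key := intervalIntegral.integral_comp_neg
      (f := fun u => ∑ y ∈ Finset.univ.filter (fun y => y ≠ x j), R (α u) (x j) y)
      (a := -te j.succ) (b := -te j.castSucc)
    rw [neg_neg, neg_neg] at key
    rw [← key]
    simp [hαdag]
  rw [h1, h2]
  -- Now handle the exp(-Θ) factor
  have hexp : Real.exp (-(∑ j : Fin n, Real.log (R (α (t j)) (x j.castSucc) (x j.succ) /
        R (α (t j)) (x j.succ) (x j.castSucc))))
      = ∏ j : Fin n, (R (α (t j)) (x j.succ) (x j.castSucc) /
          R (α (t j)) (x j.castSucc) (x j.succ)) := by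
    rw [← Finset.sum_neg_distrib, Real.exp_sum]
    refine Finset.prod_congr rfl fun j _ => ?_
    rw [Real.exp_neg, Real.exp_log (div_pos (hpos j) (hpos' j)), inv_div]
  rw [hexp, ← mul_assoc, Finset.prod_mul_distrib.symm]
  congr 1
  refine Finset.prod_congr rfl fun j _ => ?_
  rw [div_mul_cancel₀ _ (hpos j).ne']
end

section
/- For the stationary distribution ρ^{(β₁,β₂)} of the toy heat-conduction model, the symmetrized Shannon entropy with respect to the velocity-reversal involution (j,v,k)* = (j,-v,k) equals S_sym[ρ^{(β₁,β₂)}] = ((β₁+β₂)/2)·((u(β₁)+u(β₂))/2) + (log Z(β₁) + log Z(β₂))/2 + log(2L), where u(β) = Z(β)^{-1} Σ_k u_k e^{-βu_k}. -/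
/-- Symmetrized Shannon entropy of the stationary distribution of the toy
heat-conduction model. -/
theorem toy_model_symmetrized_shannon_entropy (L n : ℕ) (hL : 2 ≤ L) (hn : 1 ≤ n)
    (u : Fin n → ℝ) (β₁ β₂ : ℝ)
    (Z uavg : ℝ → ℝ) (hZ : ∀ β, Z β = ∑ k : Fin n, Real.exp (-β * u k))
    (huavg : ∀ β, uavg β = (∑ k : Fin n, u k * Real.exp (-β * u k)) / Z β)
    (ρ : (Fin L × Bool × Fin n) → ℝ)
    (hρ : ∀ (j : Fin L) (v : Bool) (k : Fin n),
      ρ (j, v, k) = (1 / (2 * L)) *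
        (if v = true then Real.exp (-β₁ * u k) / Z β₁
         else Real.exp (-β₂ * u k) / Z β₂))
    (star : (Fin L × Bool × Fin n) → (Fin L × Bool × Fin n))
    (hstar : ∀ (j : Fin L) (v : Bool) (k : Fin n), star (j, v, k) = (j, !v, k)) :
    -∑ x, ρ x * Real.log (Real.sqrt (ρ x * ρ (star x)))
      = ((β₁ + β₂) / 2) * ((uavg β₁ + uavg β₂) / 2)
        + (Real.log (Z β₁) + Real.log (Z β₂)) / 2 + Real.log (2 * L) := by
  have hLpos : (0:ℝ) < (L:ℝ) := by
    have : 0 < L := by omega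
    exact_mod_cast this
  have hZ1 : 0 < Z β₁ := by
    rw [hZ]; exact Finset.sum_pos (fun k _ => Real.exp_pos _)
      (Finset.univ_nonempty_iff.2 ⟨⟨0, hn⟩⟩)
  have hZ2 : 0 < Z β₂ := by
    rw [hZ]; exact Finset.sum_pos (fun k _ => Real.exp_pos _)
      (Finset.univ_nonempty_iff.2 ⟨⟨0, hn⟩⟩)
  set c : ℝ := 1 / (2 * L) with hc
  have hcpos : 0 < c := by positivity
  set A : Fin n → ℝ := fun k => Real.exp (-β₁ * u k) / Z β₁ with hAdef
  set B : Fin n → ℝ := fun k => Real.exp (-β₂ * u k) / Z β₂ with hBdef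
  have hA : ∀ k, 0 < A k := fun k => by simp only [hAdef]; positivity
  have hB : ∀ k, 0 < B k := fun k => by simp only [hBdef]; positivity
  have hlogA : ∀ k, Real.log (A k) = -β₁ * u k - Real.log (Z β₁) := fun k => by
    simp only [hAdef]
    rw [Real.log_div (Real.exp_ne_zero _) hZ1.ne', Real.log_exp]
  have hlogB : ∀ k, Real.log (B k) = -β₂ * u k - Real.log (Z β₂) := fun k => by
    simp only [hBdef]
    rw [Real.log_div (Real.exp_ne_zero _) hZ2.ne', Real.log_exp]
  have hlogm : ∀ k, Real.log (Real.sqrt (c * A k * (c * B k)))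
      = Real.log c + (-β₁ * u k - Real.log (Z β₁) + (-β₂ * u k - Real.log (Z β₂))) / 2 := by
    intro k
    have h1 : (0:ℝ) ≤ c * A k * (c * B k) := by positivity
    rw [Real.log_sqrt h1, Real.log_mul (by positivity) (by positivity),
      Real.log_mul hcpos.ne' (hA k).ne', Real.log_mul hcpos.ne' (hB k).ne',
      hlogA, hlogB]
    ring
  -- sums of A, B and u*A, u*B
  have hP : ∑ k, A k = 1 := by
    simp only [hAdef]
    rw [← Finset.sum_div, ← hZ, div_self hZ1.ne']
  have hQ : ∑ k, B k = 1 := by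
    simp only [hBdef]
    rw [← Finset.sum_div, ← hZ, div_self hZ2.ne']
  have hT1 : ∑ k, u k * A k = uavg β₁ := by
    simp only [hAdef, huavg, ← mul_div_assoc, ← Finset.sum_div]
  have hT2 : ∑ k, u k * B k = uavg β₂ := by
    simp only [hBdef, huavg, ← mul_div_assoc, ← Finset.sum_div]
  -- rewrite LHS sum
  have hsum : ∑ x : Fin L × Bool × Fin n, ρ x * Real.log (Real.sqrt (ρ x * ρ (star x)))
      = (L : ℝ) * ∑ k : Fin n,
          (c * A k * Real.log (Real.sqrt (c * A k * (c * B k)))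
           + c * B k * Real.log (Real.sqrt (c * B k * (c * A k)))) := by
    rw [Fintype.sum_prod_type]
    have hconst : ∀ j : Fin L,
        ∑ y : Bool × Fin n, ρ (j, y) * Real.log (Real.sqrt (ρ (j, y) * ρ (star (j, y))))
        = ∑ k : Fin n,
          (c * A k * Real.log (Real.sqrt (c * A k * (c * B k)))
           + c * B k * Real.log (Real.sqrt (c * B k * (c * A k)))) := by
      intro j
      rw [Fintype.sum_prod_type, Fintype.sum_bool, ← Finset.sum_add_distrib]
      refine Finset.sum_congr rfl fun k _ => ?_
      simp only [hstar, hρ, Bool.not_true, Bool.not_false, Bool.false_eq_true, if_true, if_false]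
      rfl
    simp only [hconst, Finset.sum_const, Finset.card_univ, Fintype.card_fin, nsmul_eq_mul]
  rw [hsum]
  have hLc : (L : ℝ) * c = 1 / 2 := by
    rw [hc]; field_simp
  -- expand the k-sum
  have hexp : ∑ k : Fin n,
        (c * A k * Real.log (Real.sqrt (c * A k * (c * B k)))
         + c * B k * Real.log (Real.sqrt (c * B k * (c * A k))))
      = c * ((Real.log c - (Real.log (Z β₁) + Real.log (Z β₂)) / 2) * ((∑ k, A k) + ∑ k, B k)
          - ((β₁ + β₂) / 2) * ((∑ k, u k * A k) + ∑ k, u k * B k)) := by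
    have step : ∀ k : Fin n,
        c * A k * Real.log (Real.sqrt (c * A k * (c * B k)))
         + c * B k * Real.log (Real.sqrt (c * B k * (c * A k)))
      = c * ((Real.log c - (Real.log (Z β₁) + Real.log (Z β₂)) / 2) * (A k + B k)
          - ((β₁ + β₂) / 2) * (u k * A k + u k * B k)) := by
      intro k
      rw [show c * B k * (c * A k) = c * A k * (c * B k) by ring, hlogm k]
      ring
    simp only [step]
    rw [← Finset.mul_sum]
    congr 1
    rw [Finset.sum_sub_distrib, ← Finset.mul_sum, ← Finset.mul_sum,
      Finset.sum_add_distrib, Finset.sum_add_distrib]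
  rw [hexp, hP, hQ, hT1, hT2]
  have hlogc : Real.log c = -Real.log (2 * L) := by
    rw [hc, one_div, Real.log_inv]
  rw [show (L:ℝ) * (c * ((Real.log c - (Real.log (Z β₁) + Real.log (Z β₂)) / 2) * (1 + 1)
      - (β₁ + β₂) / 2 * (uavg β₁ + uavg β₂)))
    = (L:ℝ) * c * ((Real.log c - (Real.log (Z β₁) + Real.log (Z β₂)) / 2) * (1 + 1)
      - (β₁ + β₂) / 2 * (uavg β₁ + uavg β₂)) by ring, hLc, hlogc]
  ring
end
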